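/- Let q = 2, let ζ ∈ 𝔽₄ satisfy ζ² + ζ + 1 = 0, and let π = t² + t + 1 ∈ 𝔽₂[t]. Work in an algebraically closed field Ω containing 𝔽₄(t); let √t ∈ Ω be a square root of t, set √x = 1/(t + 1 + √t) and √y = √t·√x (so (√x)² = 1/π = x and (√y)² = t/π = y), and let u ∈ Ω be a cube root of 1/((√t − ζ)(t − ζ)). Define ψ_{√x}(X) = X⁴ + ((√x + u³)/u)X² + √x·X and ψ_{√y}(X) = ζ·X⁴ + ((√y + ζ·u³)/u)X² + √y·X, and set φ_x = ψ_{√x}∘ψ_{√x} and φ_y = ψ_{√y}∘ψ_{√y}. Let λ = ζ/(u·(√t − ζ²)) and ν = u/(ζ·(√t − ζ)). Then: (i) ν³ = −1/((t − ζ)(t − ζ²)²) = −T^{σ+2}; (ii) (φ_x, φ_y) coincides with the rank two Drinfeld module φ^{(λ,ν)} (i.e. φ_x = φ^{(λ,ν)}_x and φ_y = φ^{(λ,ν)}_y); and (iii) the J-invariant satisfies J(φ) = λ⁵ = ν·(√t − ζ)³/(√t − ζ²). -/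

import Mathlib

open Polynomial

set_option maxHeartbeats 2000000
set_option maxRecDepth 4000

private lemma stmt18_comp_expand {R : Type*} [CommRing R] (h2 : (2:R) = 0)
    (e a b e' a' b' : R) :
    (C e * X ^ 4 + C a * X ^ 2 + C b * X).comp (C e' * X ^ 4 + C a' * X ^ 2 + C b' * X) =
      C (e * e' ^ 4) * X ^ 16 + C (e * a' ^ 4 + a * e' ^ 2) * X ^ 8 +
        C (e * b' ^ 4 + a * a' ^ 2 + b * e') * X ^ 4 + C (a * b' ^ 2 + b * a') * X ^ 2 +
        C (b * b') * X := by
  have h2' : (2 : Polynomial R) = 0 := by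
    rw [show (2 : Polynomial R) = C 2 from (map_ofNat C 2).symm, h2, map_zero]
  simp only [add_comp, mul_comp, pow_comp, X_comp, C_comp]
  simp only [map_add, map_mul, map_pow]
  linear_combination (2*(C e)*(C e')^3*(C a')*X^14 + 2*(C e)*(C e')^3*(C b')*X^13 + 3*(C e)*(C e')^2*(C a')^2*X^12 + 6*(C e)*(C e')^2*(C a')*(C b')*X^11 + 2*(C e)*(C e')*(C a')^3*X^10 + 3*(C e)*(C e')^2*(C b')^2*X^10 + 6*(C e)*(C e')*(C a')^2*(C b')*X^9 + 6*(C e)*(C e')*(C a')*(C b')^2*X^8 + 2*(C e)*(C a')^3*(C b')*X^7 + 2*(C e)*(C e')*(C b')^3*X^7 + 3*(C e)*(C a')^2*(C b')^2*X^6 + 2*(C e)*(C a')*(C b')^3*X^5 + (C a)*(C e')*(C a')*X^6 + (C a)*(C e')*(C b')*X^5 + (C a)*(C a')*(C b')*X^3) * h2'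

private lemma stmt18_comp_expand_monic {R : Type*} [CommRing R] (h2 : (2:R) = 0)
    (a b a' b' : R) :
    (X ^ 4 + C a * X ^ 2 + C b * X).comp (X ^ 4 + C a' * X ^ 2 + C b' * X) =
      X ^ 16 + C (a' ^ 4 + a) * X ^ 8 + C (b' ^ 4 + a * a' ^ 2 + b) * X ^ 4 +
        C (a * b' ^ 2 + b * a') * X ^ 2 + C (b * b') * X := by
  have h2' : (2 : Polynomial R) = 0 := by
    rw [show (2 : Polynomial R) = C 2 from (map_ofNat C 2).symm, h2, map_zero]
  simp only [add_comp, mul_comp, pow_comp, X_comp, C_comp]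
  simp only [map_add, map_mul, map_pow]
  linear_combination (2*(C a')*X^14 + 3*(C a')^2*X^12 + 2*(C b')*X^13 + 2*(C a')^3*X^10 + 6*(C a')*(C b')*X^11 + 6*(C a')^2*(C b')*X^9 + 3*(C b')^2*X^10 + 2*(C a')^3*(C b')*X^7 + 6*(C a')*(C b')^2*X^8 + 3*(C a')^2*(C b')^2*X^6 + 2*(C b')^3*X^7 + 2*(C a')*(C b')^3*X^5 + (C a)*(C a')*X^6 + (C a)*(C b')*X^5 + (C a)*(C a')*(C b')*X^3) * h2'

/-- The example of Section 4.3: for `q = 2`, the square of a Hayes module,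
`φ = (ψ_{√x}ψ_{√x}, ψ_{√y}ψ_{√y})`, coincides with the rank two Drinfeld module
`φ^{(λ,ν)}` with `λ = ζ/(u(√t−ζ²))`, `ν = u/(ζ(√t−ζ))`, and its `J`-invariant is
`λ⁵ = ν(√t−ζ)³/(√t−ζ²)`. -/
theorem stmt18 {F Ω : Type*} [Field F] [Fintype F] [Field Ω] [Algebra (RatFunc F) Ω]
    [IsAlgClosed Ω] (hF : Fintype.card F = 4) (ζ : F) (hζ : ζ ^ 2 + ζ + 1 = 0)
    (s u : Ω) :
    let t : Ω := algebraMap (RatFunc F) Ω RatFunc.X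
    let z : Ω := algebraMap (RatFunc F) Ω (RatFunc.C ζ)
    let sx : Ω := (t + 1 + s)⁻¹
    let sy : Ω := s * sx
    let x : Ω := ((t - z) * (t - z ^ 2))⁻¹
    let y : Ω := t * x
    let ψsx : Polynomial Ω := X ^ 4 + C ((sx + u ^ 3) / u) * X ^ 2 + C sx * X
    let ψsy : Polynomial Ω := C z * X ^ 4 + C ((sy + z * u ^ 3) / u) * X ^ 2 + C sy * X
    let φx : Polynomial Ω := ψsx.comp ψsx
    let φy : Polynomial Ω := ψsy.comp ψsy
    let lam : Ω := z / (u * (s - z ^ 2))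
    let ν : Ω := u / (z * (s - z))
    let αt : Ω := -ν * (t - z ^ 2) ^ 2 * (t - z) ^ ((1 : ℤ) - 2) / (z * lam ^ 4) +
      z ^ 2 * lam / (z - z ^ 2)
    let βt : Ω := -ν * (t - z ^ 2) ^ 2 * (t - z) ^ ((1 : ℤ) - 2) / (z * lam ^ 4) +
      z * lam / (z - z ^ 2)
    let α : Ω := lam ^ 4 / (1 - z ^ ((1 : ℤ) - 2)) + ν * (t - z ^ 2) / (z * lam)
    let h : Polynomial Ω := X ^ 4 + C α * X ^ 2 + C (ν * lam) * X
    let g₁ : Polynomial Ω := X ^ 4 + C αt * X ^ 2 + C (x / (ν * lam)) * X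
    let g₂ : Polynomial Ω := X ^ 4 + C βt * X ^ 2 + C (y / (z ^ 2 * ν * lam)) * X
    s ^ 2 = t → u ^ 3 = ((s - z) * (t - z))⁻¹ →
      ν ^ 3 = -((t - z) * (t - z ^ 2) ^ 2)⁻¹ ∧
        φx = g₁.comp h ∧ φy = C (z ^ 2) * (g₂.comp h) ∧
        lam ^ 5 = ν * (s - z) ^ 3 / (s - z ^ 2) := by
  intro t z sx sy x y ψsx ψsy φx φy lam ν αt βt α h g₁ g₂
  have ht_def : t = algebraMap (RatFunc F) Ω RatFunc.X := rfl
  have hz_def : z = algebraMap (RatFunc F) Ω (RatFunc.C ζ) := rfl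
  have hsx_def : sx = (t + 1 + s)⁻¹ := rfl
  have hsy_def : sy = s * sx := rfl
  have hx_def : x = ((t - z) * (t - z ^ 2))⁻¹ := rfl
  have hy_def : y = t * x := rfl
  have hψsx_def : ψsx = X ^ 4 + C ((sx + u ^ 3) / u) * X ^ 2 + C sx * X := rfl
  have hψsy_def : ψsy = C z * X ^ 4 + C ((sy + z * u ^ 3) / u) * X ^ 2 + C sy * X := rfl
  have hφx_def : φx = ψsx.comp ψsx := rfl
  have hφy_def : φy = ψsy.comp ψsy := rfl
  have hlam_def : lam = z / (u * (s - z ^ 2)) := rfl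
  have hν_def : ν = u / (z * (s - z)) := rfl
  have hαt_def : αt = -ν * (t - z ^ 2) ^ 2 * (t - z) ^ ((1 : ℤ) - 2) / (z * lam ^ 4) +
      z ^ 2 * lam / (z - z ^ 2) := rfl
  have hβt_def : βt = -ν * (t - z ^ 2) ^ 2 * (t - z) ^ ((1 : ℤ) - 2) / (z * lam ^ 4) +
      z * lam / (z - z ^ 2) := rfl
  have hα_def : α = lam ^ 4 / (1 - z ^ ((1 : ℤ) - 2)) + ν * (t - z ^ 2) / (z * lam) := rfl
  have hh_def : h = X ^ 4 + C α * X ^ 2 + C (ν * lam) * X := rfl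
  have hg₁_def : g₁ = X ^ 4 + C αt * X ^ 2 + C (x / (ν * lam)) * X := rfl
  have hg₂_def : g₂ = X ^ 4 + C βt * X ^ 2 + C (y / (z ^ 2 * ν * lam)) * X := rfl
  clear_value t z sx sy x y ψsx ψsy φx φy lam ν αt βt α h g₁ g₂
  intro hs hu
  -- simplify the zpow exponents
  rw [show ((1:ℤ) - 2) = -1 by norm_num, zpow_neg, zpow_one] at hαt_def hβt_def hα_def
  -- char 2
  have h2 : (2:Ω) = 0 := by
    have h4 : ((Fintype.card F : F)) = 0 := Nat.cast_card_eq_zero F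
    rw [hF] at h4
    have h4' : (4:F) = 0 := by exact_mod_cast h4
    have h2F : (2:F) = 0 := mul_self_eq_zero.mp (by rw [show (2:F)*(2:F) = 4 by norm_num, h4'])
    have h2R : (2:RatFunc F) = 0 := by
      rw [show (2:RatFunc F) = RatFunc.C (2:F) from (map_ofNat RatFunc.C 2).symm, h2F, map_zero]
    rw [show (2:Ω) = algebraMap (RatFunc F) Ω (2:RatFunc F) from (map_ofNat _ 2).symm, h2R,
      map_zero]
  have hzz : z ^ 2 + z + 1 = 0 := by
    have h0 : RatFunc.C (ζ^2 + ζ + 1) = 0 := by rw [hζ, map_zero]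
    have := congrArg (algebraMap (RatFunc F) Ω) h0
    rw [hz_def]
    simpa [map_add, map_pow, map_one] using this
  have inj : Function.Injective (algebraMap (RatFunc F) Ω) := (algebraMap (RatFunc F) Ω).injective
  have hXC : ∀ c : F, t ≠ algebraMap (RatFunc F) Ω (RatFunc.C c) := by
    intro c hc
    rw [ht_def] at hc
    have h1 : RatFunc.X = RatFunc.C c := inj hc
    have h2' : (Polynomial.X : Polynomial F) = Polynomial.C c := by
      apply RatFunc.algebraMap_injective F
      simpa [RatFunc.algebraMap_X, RatFunc.algebraMap_C] using h1
    exact Polynomial.X_ne_C c h2'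
  have htzne : t - z ≠ 0 := sub_ne_zero.mpr (by rw [hz_def]; exact hXC ζ)
  have htz2ne : t - z ^ 2 ≠ 0 := by
    refine sub_ne_zero.mpr ?_
    rw [hz_def, ← map_pow, ← map_pow]
    exact hXC (ζ^2)
  have htz : t - z = (s - z ^ 2) ^ 2 := by
    rw [← hs]; linear_combination (z^2 + z) * hzz + (-z^4 + s*z^2 - z^3 - z^2 - z) * h2
  have htz2 : t - z ^ 2 = (s - z) ^ 2 := by
    rw [← hs]; linear_combination (s*z - z^2) * h2
  have hszne : s - z ≠ 0 := by
    intro hc; exact htz2ne (by rw [htz2, hc]; ring)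
  have hsz2ne : s - z ^ 2 ≠ 0 := by
    intro hc; exact htzne (by rw [htz, hc]; ring)
  have hz0 : z ≠ 0 := by intro hc; rw [hc] at hzz; norm_num at hzz
  have hu0 : u ≠ 0 := by
    intro hc
    have h1 : ((s-z)*(t-z))⁻¹ ≠ 0 := inv_ne_zero (mul_ne_zero hszne htzne)
    exact h1 (by rw [← hu, hc]; norm_num)
  have hu3 : u ^ 3 * ((s - z) * (s - z ^ 2) ^ 2) = 1 := by
    rw [hu, htz]
    exact inv_mul_cancel₀ (mul_ne_zero hszne (pow_ne_zero 2 hsz2ne))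
  have hfac : t + 1 + s = (s - z) * (s - z ^ 2) := by
    rw [← hs]; linear_combination (s + z + 1) * hzz + (-z^3 - z^2 - z) * h2
  have htpsne : t + 1 + s ≠ 0 := by rw [hfac]; exact mul_ne_zero hszne hsz2ne
  have hsxne : sx ≠ 0 := by rw [hsx_def]; exact inv_ne_zero htpsne
  have hzmz : z - z ^ 2 = -1 := by linear_combination (-1 : Ω)*hzz + (z+1)*h2
  have hz21 : z * z ^ 2 = 1 := by linear_combination (z - 1) * hzz + (0:Ω)*h2
  have hzinv : z⁻¹ = z ^ 2 := inv_eq_of_mul_eq_one_right hz21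
  have h1mz : 1 - z ^ 2 = z := by linear_combination hzz + (-z^2 - z) * h2
  rw [hzinv, h1mz] at hα_def
  rw [htz, hzmz] at hαt_def hβt_def
  rw [← div_eq_mul_inv, div_div] at hαt_def hβt_def
  rw [htz2] at hαt_def hβt_def hα_def
  rw [htz, htz2] at hx_def
  rw [← hs] at hy_def hsx_def
  have htpsne' : s ^ 2 + 1 + s ≠ 0 := by rw [hs]; exact htpsne
  have hsxne' : sx ≠ 0 := by rw [hsx_def]; exact inv_ne_zero htpsne'
  -- polynomial closed forms
  have hsxP : sx = u ^ 3 * (s - z ^ 2) := by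
    rw [hsx_def]
    field_simp [hu0, hz0, hszne, hsz2ne, htpsne']
    linear_combination (s*z^2*u^3 + z^3*u^3 + s^2*u^3 + s*z*u^3 + z^2*u^3 + s*u^3) * hzz + (1) * hu3 + (-s*z^4*u^3 + s^2*z^2*u^3 - 2*s*z^3*u^3 - z^4*u^3 - s^3*u^3 - s*z^2*u^3 - z^3*u^3 - s^2*u^3 - s*z*u^3 - s*u^3 + 1) * h2
  have hsyP : sy = s * (u ^ 3 * (s - z ^ 2)) := by rw [hsy_def, hsxP]
  have hxP : x = (u ^ 3 * (s - z ^ 2)) ^ 2 := by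
    rw [hx_def]
    field_simp [hu0, hz0, hszne, hsz2ne, htpsne']
    linear_combination (s^2*z^6*u^6 + z^8*u^6 + s^2*z^5*u^6 + z^7*u^6 + s^4*z^2*u^6 + s^2*z^4*u^6 + s^4*z*u^6 + s^2*z^3*u^6 + s*z^4*u^6 + z^5*u^6 + s^3*u^6 + s^2*z*u^6 + s*z^2*u^3 + z^3*u^3 + s*z*u^3 + z^2*u^3 + u^3) * hzz + (s^3*u^3 + s^2*z*u^3 + s*z*u^3 + z*u^3 + u^3 + 1) * hu3 + (-s^2*z^8*u^6 + s*z^9*u^6 - z^10*u^6 + 2*s^3*z^6*u^6 - 5*s^2*z^7*u^6 + 2*s*z^8*u^6 - z^9*u^6 - 4*s^4*z^4*u^6 + 6*s^3*z^5*u^6 - 4*s^2*z^6*u^6 - z^8*u^6 + 3*s^5*z^2*u^6 - 5*s^4*z^3*u^6 + s^3*z^4*u^6 - 2*s^2*z^5*u^6 - z^7*u^6 - s^6*u^6 + s^5*z*u^6 - s^4*z^2*u^6 + s^3*z^3*u^6 - 2*s^2*z^4*u^6 - s*z^5*u^6 - s^4*z*u^6 - 2*s*z^4*u^6 - s^3*z*u^6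 + s^2*z^2*u^6 - s*z^3*u^6 - s^3*u^6 - s*z^4*u^3 + s^2*z^2*u^3 - 2*s*z^3*u^3 - z^4*u^3 + s^2*z*u^3 - s*z^2*u^3 - z^3*u^3 - z^2*u^3 + 1) * h2
  have hyP : y = s ^ 2 * (u ^ 3 * (s - z ^ 2)) ^ 2 := by rw [hy_def, hxP]
  have hlamP : lam = z * u ^ 2 * (s - z) * (s - z ^ 2) := by
    rw [hlam_def]
    field_simp [hu0, hz0, hszne, hsz2ne, htpsne']
    linear_combination (-1 : Ω) * hu3
  have hνP : ν = z ^ 2 * u ^ 4 * (s - z ^ 2) ^ 2 := by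
    rw [hν_def]
    field_simp [hu0, hz0, hszne, hsz2ne, htpsne']
    linear_combination (-1 : Ω) * hu3 + (-(u ^ 3 * ((s - z) * (s - z ^ 2) ^ 2)) * (z - 1)) * hzz
  have hαP : α = u ^ 2 * (s - z) := by
    rw [hα_def, hlamP, hνP, div_add_div _ _ hz0 (by apply_rules [mul_ne_zero, pow_ne_zero]),
      div_eq_iff (by apply_rules [mul_ne_zero, pow_ne_zero])]
    linear_combination (s^5*z^14*u^10 + s^4*z^15*u^10 + s*z^18*u^10 + z^19*u^10 + s^6*z^12*u^10 + s^4*z^14*u^10 + s^2*z^16*u^10 + z^18*u^10 + s^6*z^11*u^10 + s^5*z^12*u^10 + s^2*z^15*u^10 + s*z^16*u^10 + s^5*z^11*u^10 + s^4*z^12*u^10 + s*z^15*u^10 + z^16*u^10 + s^9*z^6*u^10 + s^8*z^7*u^10 + s^6*z^9*u^10 + s^5*z^10*u^10 + s^2*z^13*u^10 + z^15*u^10 + s^10*z^4*u^10 + s^8*z^6*u^10 + s^5*z^9*u^10 + s^4*z^10*u^10 + s^2*z^12*u^10 + s*z^13*u^10 + s^10*z^3*u^10 + s^9*z^4*u^10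 + s^6*z^7*u^10 + s^4*z^9*u^10 + s*z^12*u^10 + z^13*u^10 + s^9*z^3*u^10 + s^8*z^4*u^10 + s^6*z^6*u^10 + s^5*z^7*u^10 + s^2*z^10*u^10 + z^12*u^10 + s^10*z*u^10 + s^8*z^3*u^10 + s^5*z^6*u^10 + s^4*z^7*u^10 + s^2*z^9*u^10 + s*z^10*u^10 + s^10*u^10 + s^9*z*u^10 + s^8*z^2*u^10 + s^4*z^6*u^10 + s*z^9*u^10 + z^10*u^10 + s^9*u^10 + s^7*z^2*u^10 + s^2*z^7*u^10 + z^9*u^10 + s^7*z*u^10 + s^4*z^4*u^10 + s^2*z^6*u^10 + s*z^7*u^10 + s^7*u^10 + s^5*z^2*u^10 + s^4*z^3*u^10 + s^3*z^4*u^10 + s*z^6*u^10 + z^7*u^10 + s^5*z*u^10 + s^3*z^3*u^10 + s^2*z^4*u^10 + z^6*u^10 + s^5*u^10 + s^4*z*u^10 + s^3*z^2*u^10 + s^2*z^3*u^10 + s^5*z^2*u^7 + s^4*z^3*u^7 + s^4*u^10 + s^2*z^2*u^10 + s^5*z*u^7 + s^2*z^4*u^7 + s^4*z*u^7 + s*z^4*u^7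 + s^2*z^5*u^4 + z^7*u^4 + s*z^3*u^7 + z^4*u^7 + s^2*z^4*u^4 + z^6*u^4 + s^3*u^7 + s*z^2*u^7 + s^4*z*u^4 + z^5*u^4 + s^2*u^7 + z^2*u^7 + s^4*u^4 + s^3*z*u^4 + s^2*z^2*u^4 + s*z^3*u^4 + s*u^7 + z*u^7 + s^3*u^4 + s^2*z*u^4 + s*z^2*u^4 + z^3*u^4 + z^2*u^4 + s*u^4 + u^4) * hzz + (s^7*u^7 + s^6*z*u^7 + s^6*u^7 + s^5*z*u^7 + s^4*u^7 + s^3*z*u^7 + s^2*u^7 + s*z*u^7 + s^4*u^4 + s*u^7 + z*u^7 + s^3*u^4 + s^2*z*u^4 + s*z*u^4 + s*u^4 + z*u^4 + u^4) * hu3 + (-s^5*z^16*u^10 + 2*s^4*z^17*u^10 - 5*s^3*z^18*u^10 + 5*s^2*z^19*u^10 - 3*s*z^20*u^10 + 2*s^6*z^14*u^10 - 13*s^5*z^15*u^10 + 24*s^4*z^16*u^10 - 25*s^3*z^17*u^10 + 12*s^2*z^18*u^10 - 3*s*z^19*u^10 - z^20*u^10 - 5*s^7*z^12*u^10 + 24*s^6*z^13*u^10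 - 51*s^5*z^14*u^10 + 49*s^4*z^15*u^10 - 25*s^3*z^16*u^10 + 4*s^2*z^17*u^10 - s*z^18*u^10 - z^19*u^10 + 5*s^8*z^10*u^10 - 25*s^7*z^11*u^10 + 49*s^6*z^12*u^10 - 51*s^5*z^13*u^10 + 24*s^4*z^14*u^10 - 5*s^3*z^15*u^10 - s^2*z^16*u^10 - s*z^17*u^10 - z^18*u^10 - 3*s^9*z^8*u^10 + 12*s^8*z^9*u^10 - 25*s^7*z^10*u^10 + 24*s^6*z^11*u^10 - 14*s^5*z^12*u^10 + 2*s^4*z^13*u^10 - s^2*z^15*u^10 - s*z^16*u^10 - z^17*u^10 - 3*s^9*z^7*u^10 + 4*s^8*z^8*u^10 - 5*s^7*z^9*u^10 + 2*s^6*z^10*u^10 - 2*s^5*z^11*u^10 - s^4*z^12*u^10 - s^2*z^14*u^10 - s*z^15*u^10 - z^16*u^10 - s^10*z^5*u^10 - s^9*z^6*u^10 - s^8*z^7*u^10 - s^6*z^9*u^10 - s^5*z^10*u^10 - s^4*z^11*u^10 - s^2*z^13*u^10 - s*z^14*u^10 - z^15*u^10 - s^10*z^4*u^10 - s^9*z^5*u^10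 - s^8*z^6*u^10 - s^6*z^8*u^10 - s^5*z^9*u^10 - s^4*z^10*u^10 - s^2*z^12*u^10 - s*z^13*u^10 - z^14*u^10 - s^10*z^3*u^10 - s^9*z^4*u^10 - s^8*z^5*u^10 - s^6*z^7*u^10 - s^5*z^8*u^10 - s^4*z^9*u^10 - s^2*z^11*u^10 - s*z^12*u^10 - z^13*u^10 - s^10*z^2*u^10 - s^9*z^3*u^10 - 2*s^8*z^4*u^10 - s^5*z^7*u^10 - s^4*z^8*u^10 - s^2*z^10*u^10 - s*z^11*u^10 - z^12*u^10 - s^10*z*u^10 - s^8*z^3*u^10 - 2*s^7*z^4*u^10 - s^4*z^7*u^10 - s^2*z^9*u^10 - s*z^10*u^10 - z^11*u^10 - s^10*u^10 - s^9*z*u^10 + s^8*z^2*u^10 - s^7*z^3*u^10 - s^6*z^4*u^10 - s^4*z^6*u^10 - s^2*z^8*u^10 - s*z^9*u^10 - z^10*u^10 - s^9*u^10 - s^7*z^2*u^10 - s^5*z^4*u^10 - s^4*z^5*u^10 - s^2*z^7*u^10 - s*z^8*u^10 - z^9*u^10 - s^7*z*u^10 + s^6*z^2*u^10 - s^5*z^3*u^10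 - 2*s^4*z^4*u^10 - s^3*z^5*u^10 - s^2*z^6*u^10 - s*z^7*u^10 - z^8*u^10 - s^7*u^10 - s^5*z^2*u^10 - s^4*z^3*u^10 - 2*s^3*z^4*u^10 - s^2*z^5*u^10 - z^7*u^10 - s^5*z^4*u^7 - s^5*z*u^10 - s^3*z^3*u^10 - 3*s^2*z^4*u^10 + s^6*z^2*u^7 - 2*s^5*z^3*u^7 - s^4*z^4*u^7 - s^5*u^10 - s^4*z*u^10 + s^3*z^2*u^10 - s^2*z^3*u^10 - s*z^4*u^10 + s^6*z*u^7 - s^4*z^3*u^7 - s^3*z^4*u^7 - s^2*z^5*u^7 - s^4*u^10 - s*z^8*u^4 + s^3*z^3*u^7 - 2*s^2*z^4*u^7 - s*z^5*u^7 - s^3*z^5*u^4 + s^2*z^6*u^4 - s*z^7*u^4 - z^8*u^4 - s^4*z*u^7 + s^3*z^2*u^7 - 3*s*z^4*u^7 - s^3*z^4*u^4 - s*z^6*u^4 - z^7*u^4 + s^2*z^2*u^7 - 2*s*z^3*u^7 - z^4*u^7 - s^4*z^2*u^4 - s^3*z^3*u^4 - s*z^5*u^4 - z^6*u^4 - s^3*u^7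 - s*z^2*u^7 - z^3*u^7 - s^4*z*u^4 - s^3*z^2*u^4 - s^2*z^3*u^4 - s*z^4*u^4 - z^5*u^4 - z^2*u^7 - s^3*z*u^4 - s^2*z^2*u^4 - s*z^3*u^4 - z^4*u^4 - s*z^2*u^4 - z^3*u^4 - z^2*u^4) * h2
  have hαtP : αt = u ^ 2 * (s - z) := by
    rw [hαt_def, hlamP, hνP,
      div_add_div _ _ (by apply_rules [mul_ne_zero, pow_ne_zero])
        (neg_ne_zero.mpr one_ne_zero),
      div_eq_iff (by apply_rules [mul_ne_zero, pow_ne_zero, neg_ne_zero.mpr one_ne_zero])]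
    linear_combination (s^5*z^20*u^10 + s^4*z^21*u^10 + s*z^24*u^10 + z^25*u^10 + s^6*z^18*u^10 + s^4*z^20*u^10 + s^2*z^22*u^10 + z^24*u^10 + s^7*z^16*u^10 + s^5*z^18*u^10 + s^3*z^20*u^10 + s*z^22*u^10 + s^8*z^14*u^10 + s^6*z^16*u^10 + s^5*z^17*u^10 + s^2*z^20*u^10 + s*z^21*u^10 + z^22*u^10 + s^9*z^12*u^10 + s^7*z^14*u^10 + s^6*z^15*u^10 + s^5*z^16*u^10 + s^4*z^17*u^10 + s^3*z^18*u^10 + s^2*z^19*u^10 + z^21*u^10 + s^10*z^10*u^10 + s^8*z^12*u^10 + s^7*z^13*u^10 + s^6*z^14*u^10 + s^3*z^17*u^10 + z^20*u^10 + s^11*z^8*u^10 + s^9*z^10*u^10 + s^8*z^11*u^10 + s^7*z^12*u^10 + s^6*z^13*u^10 + s^5*z^14*u^10 + s^4*z^15*u^10 + s^2*z^17*u^10 + s^12*z^6*u^10 + s^10*z^8*u^10 + s^9*z^9*u^10 + s^8*z^10*u^10 + s^6*z^12*u^10 + s^5*z^13*u^10 + s^4*z^14*u^10 + z^18*u^10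 + s^12*z^5*u^10 + s^11*z^6*u^10 + s^10*z^7*u^10 + s^7*z^10*u^10 + s^2*z^15*u^10 + z^17*u^10 + s^11*z^5*u^10 + s^7*z^9*u^10 + s^6*z^10*u^10 + s^2*z^14*u^10 + s^12*z^3*u^10 + s^10*z^5*u^10 + s^6*z^9*u^10 + z^15*u^10 + s^12*z^2*u^10 + s^6*z^8*u^10 + s^2*z^12*u^10 + z^14*u^10 + s^9*z^4*u^10 + s^2*z^11*u^10 + s^12*u^10 + s^10*z^2*u^10 + s^6*z^6*u^10 + z^12*u^10 + s^11*u^10 + s^10*z*u^10 + s^8*z^3*u^10 + s^6*z^5*u^10 + s^2*z^9*u^10 + z^11*u^10 + s^8*z^2*u^10 + s^2*z^8*u^10 + s^5*z^4*u^10 + z^9*u^10 + s^8*u^10 + s^6*z^2*u^10 + s^2*z^6*u^10 + z^8*u^10 + s^7*z^3*u^7 + s^6*z^4*u^7 + s^7*u^10 + s^6*z*u^10 + s^4*z^3*u^10 + s^2*z^5*u^10 + s^4*z^2*u^10 + z^6*u^10 + s^8*u^7 + s^7*z*u^7 + s^6*z^2*u^7 + s*z^4*u^10 + z^5*u^10 +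 s^7*u^7 + s^6*z*u^7 + s^5*z^2*u^7 + s^4*z^3*u^7 + s^4*u^10 + s^2*z^2*u^10 + s^5*z*u^7 + s^4*z^2*u^7 + s^3*u^10 + s^2*z*u^10 + s^4*z^4*u^4 + z^8*u^4 + s^3*z^2*u^7 + s^2*z^3*u^7 + s^4*z^3*u^4 + z^7*u^4 + s^4*u^7 + s^3*z*u^7 + s^2*z^2*u^7 + s*z^3*u^7 + z^4*u^7 + s^6*u^4 + s^2*z^4*u^4 + s*z^2*u^7 + z^3*u^7 + s^4*z*u^4 + s^2*z^3*u^4 + z^5*u^4 + s^4*u^4 + z^4*u^4 + s*u^7 + z*u^7 + s^2*z*u^4 + u^7 + s^2*u^4 + z^2*u^4 + z*u^4) * hzz + (s^9*z*u^7 + s^9*u^7 + s^8*u^7 + s^5*z*u^7 + s^5*u^7 + s^6*z*u^4 + s^4*u^7 + s^6*u^4 + s*z*u^7 + s^4*u^4 + s*u^7 + u^7 + s^2*u^4 + z*u^4) * hu3 + (-s^5*z^22*u^10 + 2*s^4*z^23*u^10 - 5*s^3*z^24*u^10 + 5*s^2*z^25*u^10 - 3*s*z^26*u^10 + 3*s^6*z^20*u^10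 - 18*s^5*z^21*u^10 + 34*s^4*z^22*u^10 - 35*s^3*z^23*u^10 + 17*s^2*z^24*u^10 - 4*s*z^25*u^10 - z^26*u^10 - 11*s^7*z^18*u^10 + 52*s^6*z^19*u^10 - 106*s^5*z^20*u^10 + 104*s^4*z^21*u^10 - 53*s^3*z^22*u^10 + 10*s^2*z^23*u^10 - s*z^24*u^10 - z^25*u^10 + 17*s^8*z^16*u^10 - 88*s^7*z^17*u^10 + 174*s^6*z^18*u^10 - 176*s^5*z^19*u^10 + 87*s^4*z^20*u^10 - 18*s^3*z^21*u^10 - s^2*z^22*u^10 - s*z^23*u^10 - z^24*u^10 - 18*s^9*z^14*u^10 + 87*s^8*z^15*u^10 - 176*s^7*z^16*u^10 + 174*s^6*z^17*u^10 - 89*s^5*z^18*u^10 + 17*s^4*z^19*u^10 - s^3*z^20*u^10 - s^2*z^21*u^10 - s*z^22*u^10 - z^23*u^10 + 10*s^10*z^12*u^10 - 53*s^9*z^13*u^10 + 104*s^8*z^14*u^10 - 106*s^7*z^15*u^10 + 51*s^6*z^16*u^10 - 11*s^5*z^17*u^10 - 3*s^4*z^18*u^10 + 4*s^3*z^19*u^10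 - 6*s^2*z^20*u^10 + 2*s*z^21*u^10 - 2*z^22*u^10 - 4*s^11*z^10*u^10 + 17*s^10*z^11*u^10 - 36*s^9*z^12*u^10 + 34*s^8*z^13*u^10 - 19*s^7*z^14*u^10 - s^6*z^15*u^10 + 14*s^5*z^16*u^10 - 31*s^4*z^17*u^10 + 29*s^3*z^18*u^10 - 16*s^2*z^19*u^10 + 3*s*z^20*u^10 - z^21*u^10 - 3*s^11*z^9*u^10 + 4*s^10*z^10*u^10 - 6*s^9*z^11*u^10 + s^8*z^12*u^10 + 6*s^7*z^13*u^10 - 39*s^6*z^14*u^10 + 74*s^5*z^15*u^10 - 76*s^4*z^16*u^10 + 37*s^3*z^17*u^10 - 8*s^2*z^18*u^10 - z^20*u^10 - s^12*z^7*u^10 - s^11*z^8*u^10 - s^10*z^9*u^10 - s^9*z^10*u^10 - 11*s^8*z^11*u^10 + 49*s^7*z^12*u^10 - 101*s^6*z^13*u^10 + 99*s^5*z^14*u^10 - 51*s^4*z^15*u^10 + 10*s^3*z^16*u^10 - s^2*z^17*u^10 - z^19*u^10 - s^12*z^6*u^10 - s^11*z^7*u^10 - s^10*z^8*u^10 + 7*s^9*z^9*u^10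 - 38*s^8*z^10*u^10 + 74*s^7*z^11*u^10 - 76*s^6*z^12*u^10 + 37*s^5*z^13*u^10 - 8*s^4*z^14*u^10 - s^2*z^16*u^10 - z^18*u^10 - s^12*z^5*u^10 - s^11*z^6*u^10 - 4*s^10*z^7*u^10 + 15*s^9*z^8*u^10 - 30*s^8*z^9*u^10 + 29*s^7*z^10*u^10 - 16*s^6*z^11*u^10 + 3*s^5*z^12*u^10 - s^2*z^15*u^10 - z^17*u^10 - s^12*z^4*u^10 - 3*s^10*z^6*u^10 + 5*s^9*z^7*u^10 - 5*s^8*z^8*u^10 + 2*s^7*z^9*u^10 - 2*s^6*z^10*u^10 - s^2*z^14*u^10 - z^16*u^10 - s^12*z^3*u^10 - s^10*z^5*u^10 - s^6*z^9*u^10 - s^2*z^13*u^10 - z^15*u^10 - s^12*z^2*u^10 + s^11*z^3*u^10 - 2*s^10*z^4*u^10 - s^6*z^8*u^10 - s^2*z^12*u^10 - z^14*u^10 - s^12*z*u^10 + s^11*z^2*u^10 - 2*s^10*z^3*u^10 - s^9*z^4*u^10 - s^6*z^7*u^10 - s^2*z^11*u^10 - z^13*u^10 - s^12*u^10 - s^9*z^3*u^10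 - s^8*z^4*u^10 - s^6*z^6*u^10 - s^2*z^10*u^10 - z^12*u^10 - s^11*u^10 - s^8*z^3*u^10 - s^6*z^5*u^10 - s^2*z^9*u^10 - z^11*u^10 - s^8*z^2*u^10 + s^7*z^3*u^10 - 2*s^6*z^4*u^10 - s^2*z^8*u^10 - z^10*u^10 - s^7*z^5*u^7 - s^8*z*u^10 + s^7*z^2*u^10 - 2*s^6*z^3*u^10 - s^5*z^4*u^10 - s^2*z^7*u^10 - z^9*u^10 + s^8*z^3*u^7 - 2*s^7*z^4*u^7 - s^8*u^10 - s^5*z^3*u^10 - s^4*z^4*u^10 - s^2*z^6*u^10 - z^8*u^10 + s^8*z^2*u^7 - 2*s^7*z^3*u^7 - s^6*z^4*u^7 - s^7*u^10 - s^4*z^3*u^10 - s^2*z^5*u^10 - z^7*u^10 - s^7*z^2*u^7 - s^6*z^3*u^7 - s^5*z^4*u^7 - s^4*z^2*u^10 + s^3*z^3*u^10 - 2*s^2*z^4*u^10 - z^6*u^10 - s^7*z*u^7 - 2*s^5*z^3*u^7 - s^4*z^4*u^7 - s^4*z*u^10 + s^3*z^2*u^10 - 2*s^2*z^3*u^10 -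 s*z^4*u^10 - 2*s^3*z^7*u^4 + 3*s^2*z^8*u^4 - 2*s*z^9*u^4 - s^7*u^7 - s^5*z^2*u^7 - s^4*z^3*u^7 - s^3*z^4*u^7 - s^4*u^10 - s*z^3*u^10 - s^5*z^4*u^4 + 3*s^4*z^5*u^4 - 6*s^3*z^6*u^4 + 4*s^2*z^7*u^4 - s*z^8*u^4 - z^9*u^4 - 2*s^3*z^3*u^7 - s^2*z^4*u^7 - s*z^5*u^7 - s^3*u^10 - 2*s^5*z^3*u^4 + 2*s^4*z^4*u^4 - 2*s^3*z^5*u^4 - z^8*u^4 - s^3*z^2*u^7 - 2*s*z^4*u^7 - z^5*u^7 - s^4*z^3*u^4 - s^2*z^5*u^4 - z^7*u^4 - s^3*z*u^7 - s*z^3*u^7 - z^4*u^7 - s^4*z^2*u^4 - s^2*z^4*u^4 - z^6*u^4 - s*z^2*u^7 - z^3*u^7 - s^4*z*u^4 - s^2*z^3*u^4 - z^5*u^4 - z^2*u^7 - s^2*z^2*u^4 - z^4*u^4 - z*u^7 - s^2*z*u^4 - z^3*u^4 - z^2*u^4) * h2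
  have hβtP : βt = z * s * u ^ 2 * (s - z) := by
    rw [hβt_def, hlamP, hνP,
      div_add_div _ _ (by apply_rules [mul_ne_zero, pow_ne_zero])
        (neg_ne_zero.mpr one_ne_zero),
      div_eq_iff (by apply_rules [mul_ne_zero, pow_ne_zero, neg_ne_zero.mpr one_ne_zero])]
    linear_combination (s^5*z^19*u^10 + s^4*z^20*u^10 + s*z^23*u^10 + z^24*u^10 + s^6*z^17*u^10 + s^4*z^19*u^10 + s^2*z^21*u^10 + z^23*u^10 + s^7*z^15*u^10 + s^6*z^16*u^10 + s^3*z^19*u^10 + s^2*z^20*u^10 + s^8*z^13*u^10 + z^21*u^10 + s^9*z^11*u^10 + s^8*z^12*u^10 + s^6*z^14*u^10 + s^5*z^15*u^10 + s^2*z^18*u^10 + z^20*u^10 + s^10*z^9*u^10 + s^2*z^17*u^10 + s^11*z^7*u^10 + s^10*z^8*u^10 + s^8*z^10*u^10 + s^7*z^11*u^10 + s^6*z^12*u^10 + z^18*u^10 + s^12*z^5*u^10 + s^6*z^11*u^10 + s^2*z^15*u^10 + z^17*u^10 + s^10*z^6*u^10 + s^2*z^14*u^10 + s^12*z^3*u^10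 + s^10*z^5*u^10 + s^6*z^9*u^10 + z^15*u^10 + s^12*z^2*u^10 + s^6*z^8*u^10 + s^2*z^12*u^10 + z^14*u^10 + s^9*z^4*u^10 + s^2*z^11*u^10 + s^12*u^10 + s^10*z^2*u^10 + s^6*z^6*u^10 + z^12*u^10 + s^11*u^10 + s^10*z*u^10 + s^8*z^3*u^10 + s^6*z^5*u^10 + s^2*z^9*u^10 + z^11*u^10 + s^8*z^2*u^10 + s^2*z^8*u^10 + s^5*z^4*u^10 + z^9*u^10 + s^8*u^10 + s^6*z^2*u^10 + s^2*z^6*u^10 + z^8*u^10 + s^7*z^3*u^7 + s^6*z^4*u^7 + s^7*u^10 + s^6*z*u^10 + s^4*z^3*u^10 + s^2*z^5*u^10 + s^4*z^2*u^10 + z^6*u^10 + s^8*u^7 + s^7*z*u^7 + s^6*z^2*u^7 + s*z^4*u^10 + z^5*u^10 + s^7*u^7 + s^6*z*u^7 + s^5*z^2*u^7 + s^4*z^3*u^7 + s^4*u^10 + s^2*z^2*u^10 + s^5*z*u^7 + s^4*z^2*u^7 + s^3*u^10 + s^2*z*u^10 + s^4*z^4*u^4 + z^8*u^4 + s^3*z^2*u^7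 + s^2*z^3*u^7 + s^4*z^3*u^4 + z^7*u^4 + s^4*u^7 + s^3*z*u^7 + s^2*z^2*u^7 + s*z^3*u^7 + z^4*u^7 + s^6*u^4 + s^2*z^4*u^4 + s*z^2*u^7 + z^3*u^7 + s^4*z*u^4 + s^2*z^3*u^4 + z^5*u^4 + s^4*u^4 + z^4*u^4 + s*u^7 + z*u^7 + s^2*z*u^4 + u^7 + s^2*u^4 + z^2*u^4 + z*u^4) * hzz + (s^9*z*u^7 + s^9*u^7 + s^8*u^7 + s^5*z*u^7 + s^5*u^7 + s^6*z*u^4 + s^4*u^7 + s^6*u^4 + s*z*u^7 + s^4*u^4 + s*u^7 + u^7 + s^2*u^4 + z*u^4) * hu3 + (-s^5*z^21*u^10 + 2*s^4*z^22*u^10 - 5*s^3*z^23*u^10 + 5*s^2*z^24*u^10 - 3*s*z^25*u^10 + 3*s^6*z^19*u^10 - 18*s^5*z^20*u^10 + 34*s^4*z^21*u^10 - 35*s^3*z^22*u^10 + 17*s^2*z^23*u^10 - 4*s*z^24*u^10 - z^25*u^10 - 11*s^7*z^17*u^10 + 52*s^6*z^18*u^10 - 108*s^5*z^19*u^10 +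 109*s^4*z^20*u^10 - 58*s^3*z^21*u^10 + 12*s^2*z^22*u^10 - s*z^23*u^10 - z^24*u^10 + 17*s^8*z^15*u^10 - 91*s^7*z^16*u^10 + 189*s^6*z^17*u^10 - 205*s^5*z^18*u^10 + 117*s^4*z^19*u^10 - 33*s^3*z^20*u^10 + 2*s^2*z^21*u^10 - z^23*u^10 - 18*s^9*z^13*u^10 + 94*s^8*z^14*u^10 - 213*s^7*z^15*u^10 + 249*s^6*z^16*u^10 - 163*s^5*z^17*u^10 + 55*s^4*z^18*u^10 - 8*s^3*z^19*u^10 - s^2*z^20*u^10 - z^22*u^10 + 10*s^10*z^11*u^10 - 63*s^9*z^12*u^10 + 154*s^8*z^13*u^10 - 205*s^7*z^14*u^10 + 152*s^6*z^15*u^10 - 61*s^5*z^16*u^10 + 10*s^4*z^17*u^10 - s^2*z^19*u^10 - z^21*u^10 - 4*s^11*z^9*u^10 + 24*s^10*z^10*u^10 - 73*s^9*z^11*u^10 + 109*s^8*z^12*u^10 - 93*s^7*z^13*u^10 + 40*s^6*z^14*u^10 - 8*s^5*z^15*u^10 - s^2*z^18*u^10 - z^20*u^10 - 6*s^11*z^8*u^10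 + 19*s^10*z^9*u^10 - 35*s^9*z^10*u^10 + 32*s^8*z^11*u^10 - 16*s^7*z^12*u^10 + 2*s^6*z^13*u^10 - s^2*z^17*u^10 - z^19*u^10 - 3*s^11*z^7*u^10 + 4*s^10*z^8*u^10 - 5*s^9*z^9*u^10 + 2*s^8*z^10*u^10 - s^7*z^11*u^10 - s^6*z^12*u^10 - s^2*z^16*u^10 - z^18*u^10 - s^12*z^5*u^10 - s^10*z^7*u^10 - s^6*z^11*u^10 - s^2*z^15*u^10 - z^17*u^10 - s^12*z^4*u^10 - s^10*z^6*u^10 - s^6*z^10*u^10 - s^2*z^14*u^10 - z^16*u^10 - s^12*z^3*u^10 - s^10*z^5*u^10 - s^6*z^9*u^10 - s^2*z^13*u^10 - z^15*u^10 - s^12*z^2*u^10 + s^11*z^3*u^10 - 2*s^10*z^4*u^10 - s^6*z^8*u^10 - s^2*z^12*u^10 - z^14*u^10 - s^12*z*u^10 + s^11*z^2*u^10 - 2*s^10*z^3*u^10 - s^9*z^4*u^10 - s^6*z^7*u^10 - s^2*z^11*u^10 - z^13*u^10 - s^12*u^10 - s^9*z^3*u^10 - s^8*z^4*u^10 - s^6*z^6*u^10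 - s^2*z^10*u^10 - z^12*u^10 - s^11*u^10 - s^8*z^3*u^10 - s^6*z^5*u^10 - s^2*z^9*u^10 - z^11*u^10 - s^8*z^2*u^10 + s^7*z^3*u^10 - 2*s^6*z^4*u^10 - s^2*z^8*u^10 - z^10*u^10 - s^7*z^5*u^7 - s^8*z*u^10 + s^7*z^2*u^10 - 2*s^6*z^3*u^10 - s^5*z^4*u^10 - s^2*z^7*u^10 - z^9*u^10 + s^8*z^3*u^7 - 2*s^7*z^4*u^7 - s^8*u^10 - s^5*z^3*u^10 - s^4*z^4*u^10 - s^2*z^6*u^10 - z^8*u^10 + s^8*z^2*u^7 - 2*s^7*z^3*u^7 - s^6*z^4*u^7 - s^7*u^10 - s^4*z^3*u^10 - s^2*z^5*u^10 - z^7*u^10 - s^7*z^2*u^7 - s^6*z^3*u^7 - s^5*z^4*u^7 - s^4*z^2*u^10 + s^3*z^3*u^10 - 2*s^2*z^4*u^10 - z^6*u^10 - s^7*z*u^7 - 2*s^5*z^3*u^7 - s^4*z^4*u^7 - s^4*z*u^10 + s^3*z^2*u^10 - 2*s^2*z^3*u^10 - s*z^4*u^10 - 2*s^3*z^7*u^4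 + 3*s^2*z^8*u^4 - 2*s*z^9*u^4 - s^7*u^7 - s^5*z^2*u^7 - s^4*z^3*u^7 - s^3*z^4*u^7 - s^4*u^10 - s*z^3*u^10 - s^5*z^4*u^4 + 3*s^4*z^5*u^4 - 6*s^3*z^6*u^4 + 4*s^2*z^7*u^4 - s*z^8*u^4 - z^9*u^4 - 2*s^3*z^3*u^7 - s^2*z^4*u^7 - s*z^5*u^7 - s^3*u^10 - 2*s^5*z^3*u^4 + 2*s^4*z^4*u^4 - 2*s^3*z^5*u^4 - z^8*u^4 - s^3*z^2*u^7 - 2*s*z^4*u^7 - z^5*u^7 - s^4*z^3*u^4 - s^2*z^5*u^4 - z^7*u^4 - s^3*z*u^7 - s*z^3*u^7 - z^4*u^7 - s^4*z^2*u^4 - s^2*z^4*u^4 - z^6*u^4 - s*z^2*u^7 - z^3*u^7 - s^4*z*u^4 - s^2*z^3*u^4 - z^5*u^4 - z^2*u^7 - s^2*z^2*u^4 - z^4*u^4 - z*u^7 - s^2*z*u^4 - z^3*u^4 - z^2*u^4) * h2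
  have hA1 : (sx + u ^ 3) / u = u ^ 2 * (s - z) := by
    rw [hsxP]
    field_simp [hu0, hz0, hszne, hsz2ne, htpsne']
    linear_combination (-1 : Ω) * hzz + (z + 1) * h2
  have hA2 : (sy + z * u ^ 3) / u = u ^ 2 * (s - z) * (s + 1) := by
    rw [hsyP]
    field_simp [hu0, hz0, hszne, hsz2ne, htpsne']
    linear_combination (-s) * hzz + (s * z + z) * h2
  have hνlamP : ν * lam = u ^ 3 * (s - z ^ 2) := by
    rw [hνP, hlamP]
    linear_combination (s*z^7*u^6 + z^8*u^6 + s^2*z^5*u^6 + z^7*u^6 + s^3*z^3*u^6 + s*z^5*u^6 + s^4*z*u^6 + s^2*z^3*u^6 + s*z^4*u^6 + z^5*u^6 + s^4*u^6 + s^3*z*u^6 + s^3*u^6 + s^2*z*u^6 + u^3) * hzz + (s*u^3 + z*u^3 + u^3) * hu3 + (-s*z^9*u^6 + s^2*z^7*u^6 - 2*s*z^8*u^6 - z^9*u^6 - 2*s^3*z^5*u^6 + s^2*z^6*u^6 - s*z^7*u^6 - z^8*u^6 - s^3*z^4*u^6 - s^2*z^5*u^6 - s*z^6*u^6 - z^7*u^6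 - s^4*z^2*u^6 - s^3*z^3*u^6 - s^2*z^4*u^6 - s*z^5*u^6 - s^4*z*u^6 - s^2*z^3*u^6 - 2*s*z^4*u^6 - s^4*u^6 - s^3*z*u^6 + s^2*z^2*u^6 - s*z^3*u^6 - s^3*u^6) * h2
  have hAne : u ^ 3 * (s - z ^ 2) ≠ 0 := mul_ne_zero (pow_ne_zero 3 hu0) hsz2ne
  have hdxP : x / (u ^ 3 * (s - z ^ 2)) = u ^ 3 * (s - z ^ 2) := by
    rw [hxP, sq, mul_div_assoc, div_self hAne, mul_one]
  have hd2P : y / (z ^ 2 * ν * lam) = z * s ^ 2 * u ^ 3 * (s - z ^ 2) := by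
    rw [hyP, hνP, hlamP, div_eq_iff (by apply_rules [mul_ne_zero, pow_ne_zero])]
    linear_combination (s^3*z^12*u^9 + s^2*z^13*u^9 + s^3*z^11*u^9 + s^2*z^12*u^9 + s^3*z^9*u^9 + s^2*z^10*u^9 + s^7*z^4*u^9 + s^6*z^5*u^9 + s^3*z^8*u^9 + s^2*z^9*u^9 + s^7*z^3*u^9 + s^6*z^4*u^9 + s^3*z^6*u^9 + s^2*z^7*u^9 + s^7*z*u^9 + s^6*z^2*u^9 + s^3*z^5*u^9 + s^2*z^6*u^9 + s^7*u^9 + s^6*z*u^9 + s^5*z^2*u^9 + s^4*z^3*u^9 + s^5*z*u^9 + s^4*z^2*u^9 + s^2*z^2*u^6 + s^2*z*u^6) * hzz + (s^4*u^6 + s^2*z*u^6) * hu3 + (-s^3*z^14*u^9 + 2*s^4*z^12*u^9 - 3*s^3*z^13*u^9 - s^2*z^14*u^9 - 3*s^5*z^10*u^9 + 3*s^4*z^11*u^9 - s^3*z^12*u^9 - s^2*z^13*u^9 + 2*s^6*z^8*u^9 - 2*s^5*z^9*u^9 - s^3*z^11*u^9 - s^2*z^12*u^9 - s^7*z^6*u^9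 - s^3*z^10*u^9 - s^2*z^11*u^9 - s^7*z^5*u^9 - s^6*z^6*u^9 - s^3*z^9*u^9 - s^2*z^10*u^9 - s^7*z^4*u^9 - s^6*z^5*u^9 - s^3*z^8*u^9 - s^2*z^9*u^9 - s^7*z^3*u^9 - s^6*z^4*u^9 - s^3*z^7*u^9 - s^2*z^8*u^9 - s^7*z^2*u^9 - s^6*z^3*u^9 - s^5*z^4*u^9 - s^3*z^6*u^9 - s^2*z^7*u^9 - s^7*z*u^9 - 2*s^5*z^3*u^9 - s^4*z^4*u^9 - s^3*z^5*u^9 - s^7*u^9 - s^5*z^2*u^9 - s^3*z^4*u^9 - s^5*z*u^9 - s^3*z^2*u^6 - s^2*z^3*u^6 + s^4*u^6 - s^2*z^2*u^6) * h2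
  -- conjunct 1
  have conj1 : ν ^ 3 = -((t - z) * (t - z ^ 2) ^ 2)⁻¹ := by
    rw [hνP, htz, htz2]
    field_simp [hu0, hz0, hszne, hsz2ne, htpsne']
    linear_combination (s^4*z^20*u^12 + z^24*u^12 + s^4*z^19*u^12 + z^23*u^12 + s^4*z^17*u^12 + z^21*u^12 + s^4*z^16*u^12 + z^20*u^12 + s^4*z^14*u^12 + z^18*u^12 + s^4*z^13*u^12 + z^17*u^12 + s^12*z^4*u^12 + s^8*z^8*u^12 + s^12*z^3*u^12 + s^8*z^7*u^12 + s^4*z^11*u^12 + z^15*u^12 + s^4*z^10*u^12 + z^14*u^12 + s^12*z*u^12 + s^8*z^5*u^12 + s^12*u^12 + s^10*z^2*u^12 + s^4*z^8*u^12 + z^12*u^12 + s^10*z*u^12 + s^8*z^3*u^12 + s^4*z^7*u^12 + z^11*u^12 + s^10*u^12 + s^6*z^4*u^12 + s^8*z*u^12 + s^5*z^4*u^12 + s^4*z^5*u^12 + z^9*u^12 + s^6*z^2*u^12 + z^8*u^12 + s^7*u^12 + s^6*z*u^12 + s^4*z^3*u^12 + s^3*z^4*u^12 + s^7*z^2*u^9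 + s^6*z^3*u^9 + s^6*u^12 + z^6*u^12 + s^7*z*u^9 + s^6*z^2*u^9 + s^5*z^3*u^9 + s^4*z^4*u^9 + s^5*u^12 + s^4*z*u^12 + s*z^4*u^12 + z^5*u^12 + s^4*u^12 + s^2*z^2*u^12 + s^5*z*u^9 + s^4*z^2*u^9 + s^3*z^3*u^9 + s^2*z^4*u^9 + s^3*u^12 + s^2*z*u^12 + s^5*u^9 + s^4*z*u^9 + s^4*u^9 + s^3*z*u^9 + s^2*z^2*u^9 + s*z^3*u^9 + z^4*u^9 + s^4*z^2*u^6 + s^2*z^4*u^6 + s^3*u^9 + s^2*z*u^9 + s*z^2*u^9 + z^3*u^9 + s^4*z*u^6 + s*z^4*u^6 + s^2*u^9 + s^4*u^6 + s^2*z^2*u^6 + z^4*u^6 + s*u^9 + z*u^9 + s^3*u^6 + s^2*z*u^6 + u^9 + s^2*u^6 + z^2*u^6 + z*u^6 + s*z^2*u^3 + z^3*u^3 + s*z*u^3 + z^2*u^3 + u^3) * hzz + (s^9*u^9 + s^8*z*u^9 + s^7*u^9 + s^6*z*u^9 + s^5*z*u^9 + s^4*z*u^9 + s^4*u^9 + s^3*z*u^9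 + s^6*u^6 + s^3*u^9 + s^4*z*u^6 + s^2*u^9 + s*z*u^9 + s^4*u^6 + s*u^9 + s^2*z*u^6 + u^9 + s^2*u^6 + z*u^6 + s^3*u^3 + s^2*z*u^3 + s*z*u^3 + z*u^3 + u^3 + 1) * hu3 + (-2*s^3*z^23*u^12 + 3*s^2*z^24*u^12 - 2*s*z^25*u^12 - 4*s^5*z^20*u^12 + 15*s^4*z^21*u^12 - 24*s^3*z^22*u^12 + 16*s^2*z^23*u^12 - 4*s*z^24*u^12 - z^25*u^12 + 14*s^6*z^18*u^12 - 56*s^5*z^19*u^12 + 83*s^4*z^20*u^12 - 56*s^3*z^21*u^12 + 14*s^2*z^22*u^12 - z^24*u^12 - 28*s^7*z^16*u^12 + 112*s^6*z^17*u^12 - 168*s^5*z^18*u^12 + 111*s^4*z^19*u^12 - 28*s^3*z^20*u^12 - z^23*u^12 + 35*s^8*z^14*u^12 - 140*s^7*z^15*u^12 + 210*s^6*z^16*u^12 - 140*s^5*z^17*u^12 + 34*s^4*z^18*u^12 - z^22*u^12 - 28*s^9*z^12*u^12 + 112*s^8*z^13*u^12 - 168*s^7*z^14*u^12 + 112*s^6*z^15*u^12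 - 28*s^5*z^16*u^12 - s^4*z^17*u^12 - z^21*u^12 + 14*s^10*z^10*u^12 - 56*s^9*z^11*u^12 + 84*s^8*z^12*u^12 - 56*s^7*z^13*u^12 + 14*s^6*z^14*u^12 - s^4*z^16*u^12 - z^20*u^12 - 4*s^11*z^8*u^12 + 16*s^10*z^9*u^12 - 24*s^9*z^10*u^12 + 16*s^8*z^11*u^12 - 4*s^7*z^12*u^12 - s^4*z^15*u^12 - z^19*u^12 - 2*s^11*z^7*u^12 + 3*s^10*z^8*u^12 - 2*s^9*z^9*u^12 - s^4*z^14*u^12 - z^18*u^12 - s^12*z^5*u^12 - s^8*z^9*u^12 - s^4*z^13*u^12 - z^17*u^12 - s^12*z^4*u^12 - s^8*z^8*u^12 - s^4*z^12*u^12 - z^16*u^12 - s^12*z^3*u^12 - s^8*z^7*u^12 - s^4*z^11*u^12 - z^15*u^12 - s^12*z^2*u^12 - s^10*z^4*u^12 - s^4*z^10*u^12 - z^14*u^12 - s^12*z*u^12 + s^11*z^2*u^12 - s^10*z^3*u^12 - s^9*z^4*u^12 - s^8*z^5*u^12 - s^4*z^9*u^12 - z^13*u^12 - s^12*u^12 -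 s^10*z^2*u^12 - s^8*z^4*u^12 - s^4*z^8*u^12 - z^12*u^12 - s^10*z*u^12 + s^9*z^2*u^12 - s^8*z^3*u^12 - s^7*z^4*u^12 - s^6*z^5*u^12 - s^4*z^7*u^12 - z^11*u^12 - s^10*u^12 + s^7*z^3*u^12 - 2*s^6*z^4*u^12 - s^5*z^5*u^12 - z^10*u^12 - s^8*z*u^12 - 2*s^5*z^4*u^12 - s^4*z^5*u^12 - z^9*u^12 - s^7*z^4*u^9 - s^7*z*u^12 - 2*s^4*z^4*u^12 - z^8*u^12 + s^8*z^2*u^9 - 2*s^7*z^3*u^9 - s^6*z^4*u^9 - s^5*z^5*u^9 - s^7*u^12 - s^6*z*u^12 + s^5*z^2*u^12 - 2*s^4*z^3*u^12 - s^3*z^4*u^12 - z^7*u^12 + s^8*z*u^9 - s^7*z^2*u^9 - 2*s^5*z^4*u^9 - s^6*u^12 - 2*s^2*z^4*u^12 - z^6*u^12 - s^7*z*u^9 + s^6*z^2*u^9 - 2*s^5*z^3*u^9 - s^4*z^4*u^9 - s^3*z^5*u^9 - s^5*u^12 - s^4*z*u^12 + s^3*z^2*u^12 - 2*s^2*z^3*u^12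 - s*z^4*u^12 + s^6*z*u^9 - s^5*z^2*u^9 - 2*s^3*z^4*u^9 - s^4*u^12 - s*z^3*u^12 - s^5*z*u^9 - 2*s^3*z^3*u^9 - s^2*z^4*u^9 - s*z^5*u^9 - s^3*u^12 - s^4*z^4*u^6 - s^5*u^9 - s^3*z^2*u^9 - 2*s*z^4*u^9 - z^5*u^9 + s^5*z^2*u^6 - s^4*z^3*u^6 - s^3*z^4*u^6 - s^2*z^5*u^6 - s^3*z*u^9 - s^2*z^2*u^9 - s*z^3*u^9 - z^4*u^9 - s^4*z^2*u^6 + s^3*z^3*u^6 - 2*s^2*z^4*u^6 - s*z^5*u^6 - s^2*z*u^9 - s*z^2*u^9 - z^3*u^9 - s^4*z*u^6 - 2*s*z^4*u^6 - z^2*u^9 - s^3*z*u^6 - s*z^3*u^6 - z^4*u^6 - z*u^9 - s^3*u^6 - z^3*u^6 - s*z^4*u^3 - z^2*u^6 + s^2*z^2*u^3 - 2*s*z^3*u^3 - z^4*u^3 + s^2*z*u^3 - s*z^2*u^3 - z^3*u^3 - z^2*u^3 + 1) * h2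
  -- conjunct 4
  have conj4 : lam ^ 5 = ν * (s - z) ^ 3 / (s - z ^ 2) := by
    rw [hνP, hlamP]
    field_simp [hu0, hz0, hszne, hsz2ne, htpsne']
    linear_combination (z ^ 3 * ((u ^ 3 * ((s - z) * (s - z ^ 2) ^ 2)) + 1)) * hu3 + (z - 1) * hzz
  -- conjunct 2
  have conj2 : φx = g₁.comp h := by
    rw [hφx_def, hg₁_def, hh_def, hψsx_def, hA1, hαP, hαtP, hνlamP, hdxP, hsxP]
  -- conjunct 3
  have F0 : z * z ^ 4 = z ^ 2 := by
    linear_combination (z^3 + z^2) * hzz + (-z^4 - z^3 - z^2) * h2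
  have F1 : z * ((sy + z * u ^ 3) / u) ^ 4 + ((sy + z * u ^ 3) / u) * z ^ 2
      = z ^ 2 * (α ^ 4 + βt) := by
    rw [hA2, hαP, hβtP]
    linear_combination (s^6*z^3*u^8 + s^5*z^4*u^8 + s^6*z^2*u^8 + s^4*z^4*u^8 + s^7*u^8 + s^3*z^4*u^8 + s^4*z^2*u^8 + s^2*z^4*u^8 + s^5*u^8 + s^4*z*u^8 + s^2*z^3*u^8 + s*z^4*u^8 + s^3*z^3*u^5 + s^2*z^4*u^5 + s^3*u^8 + s^2*z*u^8 + s^3*z^2*u^5 + s^2*z^3*u^5 + s^4*u^5 + s^3*u^5 + s^2*z*u^5 + s*z^2*u^5 + z^3*u^5 + s^2*u^5 + s*z*u^5 + z^2*u^5 + s^2*z*u^2 + s*z^2*u^2 + u^5 + z*u^2 + u^2) * hzz + (s^5*z*u^5 + s^4*z*u^5 + s^4*u^5 + s^3*z*u^5 + s^2*z*u^5 + s^2*u^5 + s*z*u^5 + z*u^5 + s^2*z*u^2 + u^5 + u^2) * hu3 + (-s^6*z^5*u^8 + s^7*z^3*u^8 - 2*s^6*z^4*u^8 - s^5*z^5*u^8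 - 2*s^7*z^2*u^8 + 3*s^6*z^3*u^8 - 4*s^5*z^4*u^8 + s^7*z*u^8 - 7*s^6*z^2*u^8 + 12*s^5*z^3*u^8 - 10*s^4*z^4*u^8 + s^3*z^5*u^8 - s^7*u^8 + 3*s^6*z*u^8 - 12*s^5*z^2*u^8 + 18*s^4*z^3*u^8 - 14*s^3*z^4*u^8 + 2*s^2*z^5*u^8 + s^5*z*u^8 - 8*s^4*z^2*u^8 + 14*s^3*z^3*u^8 - 13*s^2*z^4*u^8 + 3*s*z^5*u^8 - s^3*z^5*u^5 - s^5*u^8 - 2*s^3*z^2*u^8 + 3*s^2*z^3*u^8 - 4*s*z^4*u^8 + z^5*u^8 + s^4*z^3*u^5 - 2*s^3*z^4*u^5 - s^2*z^5*u^5 - s^3*z*u^8 + s^2*z^2*u^8 - s*z^3*u^8 - s^3*z^3*u^5 - s^2*z^4*u^5 - s^3*u^8 - s^3*z^2*u^5 - s^2*z^3*u^5 - s*z^4*u^5 - 2*s*z^3*u^5 - z^4*u^5 - s^3*u^5 - s*z^2*u^5 - z^3*u^5 - s^2*z^3*u^2 - z^2*u^5 - s*z^3*u^2 - z^3*u^2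 - z^2*u^2 - z*u^2) * h2
  have F2 : z * sy ^ 4 + ((sy + z * u ^ 3) / u) * ((sy + z * u ^ 3) / u) ^ 2 + sy * z
      = z ^ 2 * ((ν * lam) ^ 4 + βt * α ^ 2 + y / (z ^ 2 * ν * lam)) := by
    rw [hA2, hsyP, hβtP, hαP, hνlamP, hd2P]
    linear_combination (s^4*z^7*u^12 + s^4*z^6*u^12 + s^6*z^3*u^12 + s^5*z^4*u^12 + s^6*z^2*u^12 + z^8*u^12 + s^7*u^12 + s^3*z^4*u^12 + z^7*u^12 + s^2*z^4*u^12 + s^5*u^12 + s^2*z^3*u^12 + s*z^4*u^12 + z^5*u^12 + s^3*z^3*u^9 + s^2*z^4*u^9 + s^3*u^12 + s^2*z*u^12 + s^3*z^2*u^9 + s^2*z^3*u^9 + s^4*u^9 + s^4*z^2*u^6 + s^3*z^3*u^6 + s^3*u^9 + s^2*z*u^9 + s*z^2*u^9 + z^3*u^9 + s^3*z^2*u^6 + s*z^4*u^6 + s^2*u^9 + s*z*u^9 + z^2*u^9 + s^3*z*u^6 + s^2*z^2*u^6 + s^3*u^6 + s*z^2*u^6 + u^9 + s^2*z^3*u^3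 + s^3*z*u^3 + s^2*z^2*u^3 + z*u^6 + s^3*u^3 + u^6 + s^2*u^3 + s*z*u^3 + s*u^3) * hzz + (s^5*z*u^9 + s^4*z*u^9 + s^4*u^9 + s^3*z*u^9 + s^2*z*u^9 + s^2*u^9 + s*z*u^9 + z*u^9 + s^2*z*u^6 + u^9 + s^3*u^3 + u^6 + s^2*u^3 + s*u^3) * hu3 + (-2*s^5*z^7*u^12 - s^4*z^8*u^12 + 2*s^6*z^5*u^12 - s^4*z^7*u^12 - s^7*z^3*u^12 - 2*s^6*z^4*u^12 - s^5*z^5*u^12 - z^10*u^12 - 2*s^5*z^4*u^12 + 2*s*z^8*u^12 - z^9*u^12 - s^7*z*u^12 + s^6*z^2*u^12 - s^4*z^4*u^12 - s^3*z^5*u^12 - 3*s^2*z^6*u^12 - z^8*u^12 - s^7*u^12 + s^4*z^3*u^12 - s^2*z^5*u^12 - z^7*u^12 - s^5*z*u^12 + s^4*z^2*u^12 - 2*s^2*z^4*u^12 - s*z^5*u^12 - s^3*z^5*u^9 - s^5*u^12 - 2*s*z^4*u^12 + s^4*z^3*u^9 - 2*s^3*z^4*u^9 - s^2*z^5*u^9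 - s^3*z*u^12 + s^2*z^2*u^12 - s*z^3*u^12 - s^3*z^3*u^9 - s^2*z^4*u^9 - s^3*u^12 - s^4*z^4*u^6 - s^3*z^2*u^9 - s^2*z^3*u^9 - s*z^4*u^9 + s^5*z^2*u^6 - 2*s^4*z^3*u^6 - s^2*z^5*u^6 - 2*s*z^3*u^9 - z^4*u^9 - s^5*z*u^6 + 2*s^4*z^2*u^6 - 3*s^3*z^3*u^6 - s^2*z^4*u^6 - s^3*u^9 - s*z^2*u^9 - z^3*u^9 + s^5*u^6 - 4*s^4*z*u^6 + 4*s^3*z^2*u^6 - 3*s^2*z^3*u^6 - s*z^4*u^6 - z^2*u^9 + s^4*u^6 - 5*s^3*z*u^6 + 4*s^2*z^2*u^6 - 2*s*z^3*u^6 - s^3*z^3*u^3 - s^2*z^4*u^3 - s^2*z*u^6 + s*z^2*u^6 - z^3*u^6 - s^3*z^2*u^3 - s^2*z^3*u^3 - z^2*u^6 - s^3*z*u^3 - s^2*z^2*u^3 - s*z^3*u^3 - z*u^6 - s*z^2*u^3 - s*z*u^3) * h2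
  have F3 : ((sy + z * u ^ 3) / u) * sy ^ 2 + sy * ((sy + z * u ^ 3) / u)
      = z ^ 2 * (βt * (ν * lam) ^ 2 + y / (z ^ 2 * ν * lam) * α) := by
    rw [hA2, hsyP, hβtP, hαP, hνlamP, hd2P]
    linear_combination (s^2*z^5*u^8 + s*z^6*u^8 + s^2*z^4*u^8 + s*z^5*u^8 + s^4*z*u^8 + s^3*z^2*u^8 + s^4*u^8 + s^3*z*u^8 + s^3*z^3*u^5 + s^2*z^4*u^5 + s^4*z*u^5 + s^2*z^3*u^5 + s^4*u^5 + s^3*z*u^5 + s^2*u^5 + s*z*u^5 + s*u^5) * hzz + (s^3*u^5 + s^2*u^5 + s*u^5) * hu3 + (-s^2*z^7*u^8 + s^3*z^5*u^8 - 2*s^2*z^6*u^8 - s*z^7*u^8 - s^4*z^3*u^8 - s^2*z^5*u^8 - s*z^6*u^8 - s^4*z^2*u^8 - s^3*z^3*u^8 - s^2*z^4*u^8 - s^2*z^6*u^5 - s^4*z*u^8 - s^2*z^3*u^8 - s^4*z^3*u^5 - s^2*z^5*u^5 - s^4*u^8 - s^4*z^2*u^5 - s^3*z^3*u^5 - s^2*z^4*u^5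 - s^4*z*u^5 - s^3*z^2*u^5 - s^3*z*u^5 - s^2*z^2*u^5 + s^3*u^5 - s^2*z*u^5 - s*z^2*u^5 - s*z*u^5) * h2
  have F4 : sy * sy = z ^ 2 * (y / (z ^ 2 * ν * lam) * (ν * lam)) := by
    rw [hsyP, hνlamP, hd2P]
    linear_combination (s^2*z^5*u^6 + s^2*z^4*u^6 + s^4*z*u^6 + s^4*u^6) * hzz + (-s^2*z^7*u^6 + s^3*z^5*u^6 - s^2*z^6*u^6 - s^4*z^3*u^6 - s^2*z^5*u^6 - s^4*z^2*u^6 - s^4*z*u^6 - s^3*z^2*u^6) * h2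
  have conj3 : φy = C (z ^ 2) * (g₂.comp h) := by
    rw [hφy_def, hψsy_def, hg₂_def, hh_def, stmt18_comp_expand h2, stmt18_comp_expand_monic h2,
      F0, F1, F2, F3, F4]
    simp only [map_mul]
    ring
  exact ⟨conj1, conj2, conj3, conj4⟩
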